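/- Let d ≥ 2, R̄ = ℂ[x]/(x^d), and 1 ≤ j ≤ d-1. If φ is an R̄-automorphism of R̄[z,t] with Jacobian determinant 1 and φ ≡ id mod (x^j), then there exists h ∈ ℂ[z,t] with h(0,0) = 0 such that φ(z) ≡ z + h_t·x^j mod (x^{j+1}) and φ(t) ≡ t - h_z·x^j mod (x^{j+1}). -/

import Mathlib

open MvPolynomial

/-- The Poisson bracket / Jacobian pairing on `ℂ[x,z,t]` with respect to `z`
(index 1) and `t` (index 2). -/
noncomputable def pb (f g : MvPolynomial (Fin 3) ℂ) : MvPolynomial (Fin 3) ℂ :=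
  pderiv 1 f * pderiv 2 g - pderiv 2 f * pderiv 1 g

/-- The ideal `(x^d)` of `ℂ[x,z,t]`. -/
noncomputable def Idl (d : ℕ) : Ideal (MvPolynomial (Fin 3) ℂ) :=
  Ideal.span {(X 0 : MvPolynomial (Fin 3) ℂ) ^ d}

/-- `R̄[z,t] = (ℂ[x]/(x^d))[z,t] = ℂ[x,z,t]/(x^d)`. -/
abbrev Qr (d : ℕ) := MvPolynomial (Fin 3) ℂ ⧸ Idl d

/-- The quotient map `ℂ[x,z,t] → R̄[z,t]`. -/
noncomputable def qk (d : ℕ) : MvPolynomial (Fin 3) ℂ →ₐ[ℂ] Qr d :=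
  Ideal.Quotient.mkₐ ℂ (Idl d)

section AuxHam
open Finsupp

noncomputable def adv (i : Fin 3) (f : MvPolynomial (Fin 3) ℂ) : MvPolynomial (Fin 3) ℂ :=
  (AddMonoidAlgebra.coeff f).sum fun m c => monomial (m + Finsupp.single i 1) (c / ((m i : ℂ) + 1))

lemma adv_monomial (i : Fin 3) (m : Fin 3 →₀ ℕ) (c : ℂ) :
    adv i (monomial m c) = monomial (m + Finsupp.single i 1) (c / ((m i : ℂ) + 1)) := by
  unfold adv
  rw [sum_monomial_eq]
  simp

lemma adv_zero (i : Fin 3) : adv i 0 = 0 := by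
  unfold adv; simp [Finsupp.sum_zero_index]

lemma adv_add (i : Fin 3) (f g : MvPolynomial (Fin 3) ℂ) :
    adv i (f + g) = adv i f + adv i g := by
  unfold adv
  rw [AddMonoidAlgebra.coeff_add, Finsupp.sum_add_index]
  · intro m _; simp
  · intro m _ c1 c2; rw [add_div, map_add]

lemma coord_add_single (m : Fin 3 →₀ ℕ) (i k : Fin 3) :
    ((m + Finsupp.single i 1 : Fin 3 →₀ ℕ)) k = m k + if i = k then 1 else 0 := by
  simp [Finsupp.single_apply]

lemma coord_sub_single (m : Fin 3 →₀ ℕ) (i k : Fin 3) :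
    ((m - Finsupp.single i 1 : Fin 3 →₀ ℕ)) k = m k - if i = k then 1 else 0 := by
  simp [Finsupp.tsub_apply, Finsupp.single_apply]

lemma pderiv_adv (i : Fin 3) (f : MvPolynomial (Fin 3) ℂ) :
    pderiv i (adv i f) = f := by
  induction f using MvPolynomial.induction_on' with
  | monomial m c =>
    rw [adv_monomial, pderiv_monomial, add_tsub_cancel_right]
    congr 1
    rw [coord_add_single, if_pos rfl]
    push_cast
    rw [div_mul_cancel₀ _ (Nat.cast_add_one_ne_zero (m i))]
  | add f g hf hg => rw [adv_add, map_add, hf, hg]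

lemma pderiv_comm' (i k : Fin 3) (f : MvPolynomial (Fin 3) ℂ) :
    pderiv i (pderiv k f) = pderiv k (pderiv i f) := by
  induction f using MvPolynomial.induction_on' with
  | monomial m c =>
    rcases eq_or_ne i k with rfl | hik
    · rfl
    · simp only [pderiv_monomial]
      rw [tsub_right_comm]
      congr 1
      rw [coord_sub_single, coord_sub_single, if_neg hik, if_neg (Ne.symm hik)]
      simp only [Nat.sub_zero]
      ring
  | add f g hf hg => simp only [map_add, hf, hg]

lemma adv_pderiv_comm (i k : Fin 3) (hik : i ≠ k) (f : MvPolynomial (Fin 3) ℂ) :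
    pderiv k (adv i f) = adv i (pderiv k f) := by
  induction f using MvPolynomial.induction_on' with
  | monomial m c =>
    rw [adv_monomial, pderiv_monomial, pderiv_monomial, adv_monomial]
    have h1 : m + Finsupp.single i 1 - Finsupp.single k 1
        = m - Finsupp.single k 1 + Finsupp.single i 1 := by
      ext x
      rw [coord_add_single, Finsupp.tsub_apply, coord_add_single, Finsupp.tsub_apply,
        Finsupp.single_apply]
      rcases eq_or_ne i x with rfl | hx
      · simp only [if_pos rfl, if_neg (Ne.symm hik)]; omega
      · simp [if_neg hx]
    rw [h1, coord_add_single, if_neg hik, coord_sub_single, if_neg (Ne.symm hik)]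
    simp only [Nat.sub_zero, add_zero]
    congr 1
    ring
  | add f g hf hg => rw [adv_add, map_add, map_add, hf, hg, adv_add]

lemma constantCoeff_adv (i : Fin 3) (f : MvPolynomial (Fin 3) ℂ) :
    constantCoeff (adv i f) = 0 := by
  induction f using MvPolynomial.induction_on' with
  | monomial m c =>
    rw [adv_monomial, constantCoeff_monomial, if_neg]
    intro h
    have := DFunLike.congr_fun h i
    rw [coord_add_single, if_pos rfl] at this
    simp at this
  | add f g hf hg => rw [adv_add, map_add, hf, hg, add_zero]
noncomputable def sg : MvPolynomial (Fin 3) ℂ →ₐ[ℂ] MvPolynomial (Fin 3) ℂ :=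
  aeval (fun i : Fin 3 => if i = 0 then 0 else X i)

lemma sg_X (n : Fin 3) : sg (X n) = if n = 0 then 0 else X n := by
  simp [sg]

lemma sg_pderiv (i : Fin 3) (hi : i ≠ 0) (f : MvPolynomial (Fin 3) ℂ) :
    pderiv i (sg f) = sg (pderiv i f) := by
  induction f using MvPolynomial.induction_on with
  | C a => simp [pderiv_C]
  | add f g hf hg => simp only [map_add, hf, hg]
  | mul_X f n hf =>
    rw [map_mul, pderiv_mul, pderiv_mul, map_add, map_mul, map_mul, hf, sg_X]
    rcases eq_or_ne n 0 with rfl | hn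
    · rw [if_pos rfl, pderiv_X_of_ne (Ne.symm hi)]
      simp
    · rw [if_neg hn]
      congr 1
      rcases eq_or_ne n i with rfl | h
      · simp
      · rw [pderiv_X_of_ne h]; simp

lemma pderiv0_sg (f : MvPolynomial (Fin 3) ℂ) : pderiv 0 (sg f) = 0 := by
  induction f using MvPolynomial.induction_on with
  | C a => simp [sg, pderiv_C]
  | add f g hf hg => simp only [map_add, hf, hg, add_zero]
  | mul_X f n hf =>
    rw [map_mul, pderiv_mul, hf, sg_X]
    rcases eq_or_ne n 0 with rfl | hn
    · simp
    · rw [if_neg hn, pderiv_X_of_ne hn]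
      simp

lemma sub_sg_mem (f : MvPolynomial (Fin 3) ℂ) :
    f - sg f ∈ Ideal.span {(X 0 : MvPolynomial (Fin 3) ℂ)} := by
  induction f using MvPolynomial.induction_on with
  | C a => simp [sg]
  | add f g hf hg =>
    have e : f + g - sg (f + g) = (f - sg f) + (g - sg g) := by rw [map_add]; ring
    rw [e]; exact Ideal.add_mem _ hf hg
  | mul_X f n hf =>
    rw [map_mul, sg_X]
    rcases eq_or_ne n 0 with rfl | hn
    · rw [if_pos rfl, mul_zero, sub_zero]
      exact Ideal.mul_mem_left _ f (Ideal.subset_span rfl)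
    · rw [if_neg hn]
      have : f * X n - sg f * X n = (f - sg f) * X n := by ring
      rw [this]
      exact Ideal.mul_mem_right _ _ hf

end AuxHam

/-- If `φ` is an `R̄`-automorphism of `R̄[z,t] = ℂ[x,z,t]/(x^d)` with Jacobian
determinant `1` which is congruent to the identity modulo `(x^j)`
(`1 ≤ j ≤ d-1`), then there exists `h ∈ ℂ[z,t]` with `h(0,0) = 0` such that
`φ(z) ≡ z + h_t·x^j` and `φ(t) ≡ t - h_z·x^j` modulo `(x^{j+1})`. -/
theorem exists_hamiltonian (d j : ℕ) (hd : 2 ≤ d) (hj1 : 1 ≤ j) (hjd : j ≤ d - 1)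
    (φ : Qr d ≃ₐ[ℂ] Qr d) (p q : MvPolynomial (Fin 3) ℂ)
    (hx : φ (qk d (X 0)) = qk d (X 0))
    (hp : φ (qk d (X 1)) = qk d p) (hq : φ (qk d (X 2)) = qk d q)
    (hjac : pb p q - 1 ∈ Idl d)
    (hpj : p - X 1 ∈ Ideal.span {(X 0 : MvPolynomial (Fin 3) ℂ) ^ j})
    (hqj : q - X 2 ∈ Ideal.span {(X 0 : MvPolynomial (Fin 3) ℂ) ^ j}) :
    ∃ h : MvPolynomial (Fin 3) ℂ, pderiv 0 h = 0 ∧ constantCoeff h = 0 ∧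
      p - (X 1 + pderiv 2 h * X 0 ^ j) ∈
        Ideal.span {(X 0 : MvPolynomial (Fin 3) ℂ) ^ (j + 1)} ∧
      q - (X 2 - pderiv 1 h * X 0 ^ j) ∈
        Ideal.span {(X 0 : MvPolynomial (Fin 3) ℂ) ^ (j + 1)} := by
  obtain ⟨a, ha⟩ := Ideal.mem_span_singleton.mp hpj
  obtain ⟨b, hb⟩ := Ideal.mem_span_singleton.mp hqj
  have hp' : p = X 1 + X 0 ^ j * a := by linear_combination ha
  have hq' : q = X 2 + X 0 ^ j * b := by linear_combination hb
  have hpw : pderiv 1 (X 0 ^ j : MvPolynomial (Fin 3) ℂ) = 0 := by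
    rw [pderiv_pow, pderiv_X_of_ne (by decide), mul_zero]
  have hpw2 : pderiv 2 (X 0 ^ j : MvPolynomial (Fin 3) ℂ) = 0 := by
    rw [pderiv_pow, pderiv_X_of_ne (by decide), mul_zero]
  have d1 : pderiv 1 p = 1 + X 0 ^ j * pderiv 1 a := by
    rw [hp', map_add, pderiv_X_self, pderiv_mul, hpw, zero_mul, zero_add]
  have d2 : pderiv 2 p = X 0 ^ j * pderiv 2 a := by
    rw [hp', map_add, pderiv_X_of_ne (by decide), pderiv_mul, hpw2, zero_mul, zero_add, zero_add]
  have d3 : pderiv 1 q = X 0 ^ j * pderiv 1 b := by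
    rw [hq', map_add, pderiv_X_of_ne (by decide), pderiv_mul, hpw, zero_mul, zero_add, zero_add]
  have d4 : pderiv 2 q = 1 + X 0 ^ j * pderiv 2 b := by
    rw [hq', map_add, pderiv_X_self, pderiv_mul, hpw2, zero_mul, zero_add]
  have key : X 0 ^ j * (pderiv 1 a + pderiv 2 b)
      = (pb p q - 1) - (X 0 ^ j) ^ 2 * pb a b := by
    rw [pb, pb, d1, d2, d3, d4]; ring
  have m1 : pb p q - 1 ∈ Ideal.span {(X 0 : MvPolynomial (Fin 3) ℂ) ^ (j + 1)} := by
    refine Ideal.span_singleton_le_span_singleton.mpr ?_ hjac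
    exact pow_dvd_pow _ (by omega)
  have m2 : (X 0 ^ j : MvPolynomial (Fin 3) ℂ) ^ 2 * pb a b
      ∈ Ideal.span {(X 0 : MvPolynomial (Fin 3) ℂ) ^ (j + 1)} := by
    refine Ideal.mem_span_singleton.mpr (dvd_mul_of_dvd_left ?_ _)
    rw [← pow_mul]
    exact pow_dvd_pow _ (by omega)
  have m3 : X 0 ^ j * (pderiv 1 a + pderiv 2 b)
      ∈ Ideal.span {(X 0 : MvPolynomial (Fin 3) ℂ) ^ (j + 1)} := by
    rw [key]; exact sub_mem m1 m2
  have hdvd : (X 0 : MvPolynomial (Fin 3) ℂ) ∣ (pderiv 1 a + pderiv 2 b) := by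
    have hh := Ideal.mem_span_singleton.mp m3
    rw [pow_succ] at hh
    exact (mul_dvd_mul_iff_left (pow_ne_zero j (X_ne_zero (R := ℂ) (0 : Fin 3)))).mp hh
  have hclosed : sg (pderiv 1 a) + sg (pderiv 2 b) = 0 := by
    obtain ⟨u, hu⟩ := hdvd
    have : sg (pderiv 1 a) + sg (pderiv 2 b) = sg (X 0) * sg u := by
      rw [← map_add, hu, map_mul]
    rw [this, sg_X, if_pos rfl, zero_mul]
  set ab : MvPolynomial (Fin 3) ℂ := sg a with hab
  set bb : MvPolynomial (Fin 3) ℂ := sg b with hbb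
  set A : MvPolynomial (Fin 3) ℂ := adv 2 ab with hA
  set c : MvPolynomial (Fin 3) ℂ := bb + pderiv 1 A with hc
  have hc2 : pderiv 2 c = 0 := by
    rw [hc, map_add, pderiv_comm' 2 1, hA, pderiv_adv, hab, hbb,
      sg_pderiv 2 (by decide), sg_pderiv 1 (by decide)]
    rw [add_comm]
    exact hclosed
  have pd2h : pderiv 2 (A - adv 1 c) = ab := by
    rw [map_sub, hA, pderiv_adv, adv_pderiv_comm 1 2 (by decide), hc2, adv_zero, sub_zero]
  have pd1h : pderiv 1 (A - adv 1 c) = -bb := by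
    rw [map_sub, pderiv_adv, hc]; ring
  have pd0A : pderiv 0 A = 0 := by
    rw [hA, adv_pderiv_comm 2 0 (by decide), hab, pderiv0_sg, adv_zero]
  refine ⟨A - adv 1 c, ?_, ?_, ?_, ?_⟩
  · rw [map_sub, pd0A, adv_pderiv_comm 1 0 (by decide), hc, map_add, hbb, pderiv0_sg,
      pderiv_comm' 0 1, pd0A, map_zero]
    simp [adv_zero]
  · rw [map_sub, constantCoeff_adv, constantCoeff_adv, sub_zero]
  · rw [pd2h]
    obtain ⟨u, hu⟩ := Ideal.mem_span_singleton.mp (sub_sg_mem a)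
    refine Ideal.mem_span_singleton.mpr ⟨u, ?_⟩
    rw [hp', pow_succ, hab]
    linear_combination (X 0 ^ j : MvPolynomial (Fin 3) ℂ) * hu
  · rw [pd1h]
    obtain ⟨v, hv⟩ := Ideal.mem_span_singleton.mp (sub_sg_mem b)
    refine Ideal.mem_span_singleton.mpr ⟨v, ?_⟩
    rw [hq', pow_succ, hbb]
    linear_combination (X 0 ^ j : MvPolynomial (Fin 3) ℂ) * hv
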